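/- arXiv:1307.0597 — 2 statements merged into one kernel-verified Lean document; each statement's English description precedes it below -/
import Mathlib

section
/- For every network satisfying the standing assumptions, every synaptical unit U satisfies 1 ≤ |U| ≤ l − 1, where l is the number of homogeneous parts of the network. (Proposition 'Units', part (iii).) -/
namespace NeuralNet

open Classical

/-- Neurons `i` and `j` are *structurally identical*: `i = j`, or else the intrinsic
dynamics labels coincide, the mutual synaptic actions vanish, and every other neuron
acts equally on both. -/
def StructId {α : Type*} {N : ℕ} (F : Fin N → α) (Δ : Fin N → Fin N → ℝ)
    (i j : Fin N) : Prop :=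
  i = j ∨ (F i = F j ∧ Δ i j = 0 ∧ Δ j i = 0 ∧ ∀ h, h ≠ i → h ≠ j → Δ h i = Δ h j)

/-- A *homogeneous part* is an equivalence class of the structural-identity relation. -/
def IsHomPart {α : Type*} {N : ℕ} (F : Fin N → α) (Δ : Fin N → Fin N → ℝ)
    (A : Set (Fin N)) : Prop :=
  ∃ i, A = {j | StructId F Δ i j}

/-- A subset `U` of a homogeneous part `A` is a *unit-candidate* if for every neuron
`h ∉ A` there is at most one `i ∈ U` with `Δ i h ≠ 0`. -/
def UnitCandidate {N : ℕ} (Δ : Fin N → Fin N → ℝ) (A U : Set (Fin N)) : Prop :=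
  U ⊆ A ∧ ∀ h ∉ A, ∀ i ∈ U, ∀ j ∈ U, Δ i h ≠ 0 → Δ j h ≠ 0 → i = j

/-- A partition of the homogeneous part `A` into nonempty unit-candidates. -/
def IsUnitPartition {N : ℕ} (Δ : Fin N → Fin N → ℝ) (A : Set (Fin N))
    (P : Set (Set (Fin N))) : Prop :=
  (∀ U ∈ P, U.Nonempty ∧ UnitCandidate Δ A U) ∧ P.PairwiseDisjoint id ∧ ⋃₀ P = A

/-- A *synaptical unit* is a member of a partition of some homogeneous part `A` into
nonempty unit-candidates whose number of parts is minimal. -/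
def IsSynapticalUnit {α : Type*} {N : ℕ} (F : Fin N → α) (Δ : Fin N → Fin N → ℝ)
    (U : Set (Fin N)) : Prop :=
  ∃ A P, IsHomPart F Δ A ∧ IsUnitPartition Δ A P ∧
    (∀ Q, IsUnitPartition Δ A Q → P.ncard ≤ Q.ncard) ∧ U ∈ P

/-- `deltaIB Δ i B` : the common value of `Δ i h` over `h ∈ B` (defined by choice of a
representative of `B`; it is well-defined when `B` is a homogeneous part). -/
noncomputable def deltaIB {N : ℕ} (Δ : Fin N → Fin N → ℝ) (i : Fin N)
    (B : Set (Fin N)) : ℝ :=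
  if hB : B.Nonempty then Δ i hB.choose else 0

/-- `deltaUB Δ U B` : the inter-unit weight `Δ_{U,B}`; it is `0` if `deltaIB Δ i B = 0`
for every `i ∈ U`, and otherwise the value `deltaIB Δ i B` for a chosen `i ∈ U` with
nonzero value (unique when `U` is a unit-candidate and `B` a homogeneous part). -/
noncomputable def deltaUB {N : ℕ} (Δ : Fin N → Fin N → ℝ) (U B : Set (Fin N)) : ℝ :=
  if h : ∃ i ∈ U, deltaIB Δ i B ≠ 0 then deltaIB Δ h.choose B else 0

/-- Neuron `i` is *excitatory*. -/
def Excitatory {N : ℕ} (Δ : Fin N → Fin N → ℝ) (i : Fin N) : Prop :=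
  (∀ j, 0 ≤ Δ i j) ∧ ∃ j, 0 < Δ i j

/-- Neuron `i` is *inhibitory*. -/
def Inhibitory {N : ℕ} (Δ : Fin N → Fin N → ℝ) (i : Fin N) : Prop :=
  (∀ j, Δ i j ≤ 0) ∧ ∃ j, Δ i j < 0

/-- Neuron `i` is *mixed*. -/
def Mixed {N : ℕ} (Δ : Fin N → Fin N → ℝ) (i : Fin N) : Prop :=
  (∃ j, 0 < Δ i j) ∧ ∃ j, Δ i j < 0

/-- The image of a homogeneous part `B` under the unit bijection `φ`: the union of the
images of the units of `P` contained in `B`. -/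
def partImage {N N' : ℕ} (P : Set (Set (Fin N))) (φ : Set (Fin N) → Set (Fin N'))
    (B : Set (Fin N)) : Set (Fin N') :=
  {i' | ∃ U ∈ P, U ⊆ B ∧ i' ∈ φ U}

/-- The networks `(F, Δ)` on `Fin N` and `(F', Δ')` on `Fin N'` are *synaptically
equivalent*: there are partitions of each set of neurons into synaptical units and a
bijection `φ` between them preserving homogeneous parts, inter-unit weights, and
intrinsic dynamics labels. -/
def SynEquiv {α : Type*} {N N' : ℕ} (F : Fin N → α) (Δ : Fin N → Fin N → ℝ)
    (F' : Fin N' → α) (Δ' : Fin N' → Fin N' → ℝ) : Prop :=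
  ∃ (P : Set (Set (Fin N))) (P' : Set (Set (Fin N')))
    (φ : Set (Fin N) → Set (Fin N')),
    (∀ U ∈ P, IsSynapticalUnit F Δ U) ∧ P.PairwiseDisjoint id ∧ ⋃₀ P = Set.univ ∧
    (∀ U' ∈ P', IsSynapticalUnit F' Δ' U') ∧ P'.PairwiseDisjoint id ∧
      ⋃₀ P' = Set.univ ∧
    Set.BijOn φ P P' ∧
    (∀ U ∈ P, ∀ V ∈ P,
      ((∃ A, IsHomPart F Δ A ∧ U ⊆ A ∧ V ⊆ A) ↔
        (∃ A', IsHomPart F' Δ' A' ∧ φ U ⊆ A' ∧ φ V ⊆ A'))) ∧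
    (∀ U ∈ P, ∀ B, IsHomPart F Δ B →
      deltaUB Δ U B = deltaUB Δ' (φ U) (partImage P φ B)) ∧
    (∀ U ∈ P, ∀ i ∈ U, ∀ i' ∈ φ U, F i = F' i')

/-- The labels of the *split network* obtained by splitting the mixed neuron `i`. -/
def splitF {α : Type*} {N : ℕ} (F : Fin N → α) (i : Fin N) : Fin (N + 1) → α :=
  fun j => if hj : (j : ℕ) < N then F ⟨j, hj⟩ else F i

/-- The synaptic actions of the *split network* obtained by splitting the mixed neuron
`i`: neuron `i` keeps the positive parts of its actions, the new neuron `N` gets the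
negative parts, and the new neuron receives exactly what `i` receives. -/
def splitΔ {N : ℕ} (Δ : Fin N → Fin N → ℝ) (i : Fin N) :
    Fin (N + 1) → Fin (N + 1) → ℝ := fun j h =>
  if hj : (j : ℕ) < N then
    if hh : (h : ℕ) < N then
      if (⟨j, hj⟩ : Fin N) = i then max (Δ i ⟨h, hh⟩) 0 else Δ ⟨j, hj⟩ ⟨h, hh⟩
    else
      if (⟨j, hj⟩ : Fin N) = i then 0 else Δ ⟨j, hj⟩ i
  else
    if hh : (h : ℕ) < N then
      if (⟨h, hh⟩ : Fin N) = i then 0 else min (Δ i ⟨h, hh⟩) 0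
    else 0


lemma structId_refl {α : Type*} {N : ℕ} (F : Fin N → α) (Δ : Fin N → Fin N → ℝ)
    (i : Fin N) : StructId F Δ i i := Or.inl rfl

lemma structId_symm {α : Type*} {N : ℕ} {F : Fin N → α} {Δ : Fin N → Fin N → ℝ}
    {i j : Fin N} (h : StructId F Δ i j) : StructId F Δ j i := by
  rcases h with h | ⟨h1, h2, h3, h4⟩
  · exact Or.inl h.symm
  · exact Or.inr ⟨h1.symm, h3, h2, fun g hg1 hg2 => (h4 g hg2 hg1).symm⟩

lemma structId_trans {α : Type*} {N : ℕ} {F : Fin N → α} {Δ : Fin N → Fin N → ℝ}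
    {i j k : Fin N} (hij : StructId F Δ i j) (hjk : StructId F Δ j k) :
    StructId F Δ i k := by
  rcases hij with rfl | ⟨h1, h2, h3, h4⟩
  · exact hjk
  rcases hjk with rfl | ⟨g1, g2, g3, g4⟩
  · exact Or.inr ⟨h1, h2, h3, h4⟩
  by_cases hik : i = k
  · exact Or.inl hik
  refine Or.inr ⟨h1.trans g1, ?_, ?_, ?_⟩
  · -- Δ i k = 0 : use g4 with h = i
    by_cases hij2 : i = j
    · subst hij2; exact g2
    · rw [← g4 i hij2 hik]; exact h2
  · -- Δ k i = 0 : use h4 with h = k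
    by_cases hkj : k = j
    · subst hkj; exact h3
    · rw [h4 k (Ne.symm hik) hkj]; exact g3
  · intro g hg1 hg2
    by_cases hgj : g = j
    · subst hgj; rw [h3, g2]
    · rw [h4 g hg1 hgj, g4 g hgj hg2]

/-- Inside a homogeneous part all synaptic actions vanish. -/
lemma homPart_delta_zero {α : Type*} {N : ℕ} {F : Fin N → α} {Δ : Fin N → Fin N → ℝ}
    (hdiag : ∀ i, Δ i i = 0) {A : Set (Fin N)} (hA : IsHomPart F Δ A)
    {i j : Fin N} (hi : i ∈ A) (hj : j ∈ A) : Δ i j = 0 := by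
  obtain ⟨i₀, rfl⟩ := hA
  have hij : StructId F Δ i j := structId_trans (structId_symm hi) hj
  rcases hij with rfl | ⟨_, h2, _, _⟩
  · exact hdiag i
  · exact h2

/-- every synaptical unit `U` satisfies `1 ≤ |U| ≤ l − 1`, where `l` is the
number of homogeneous parts. -/
theorem synaptical_unit_card {α : Type*} {N : ℕ} (F : Fin N → α)
    (Δ : Fin N → Fin N → ℝ) (hN : 2 ≤ N) (hdiag : ∀ i, Δ i i = 0) (hnind : ∀ i, ∃ j, Δ i j ≠ 0)
    (U : Set (Fin N)) (hU : IsSynapticalUnit F Δ U) :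
    1 ≤ U.ncard ∧ U.ncard ≤ {A : Set (Fin N) | IsHomPart F Δ A}.ncard - 1 := by
  obtain ⟨A, P, hA, hPart, _, hUP⟩ := hU
  obtain ⟨hUne, hUA, hcand⟩ :
      U.Nonempty ∧ U ⊆ A ∧ ∀ h ∉ A, ∀ i ∈ U, ∀ j ∈ U, Δ i h ≠ 0 → Δ j h ≠ 0 → i = j := by
    obtain ⟨hne, hsub, hc⟩ := hPart.1 U hUP
    exact ⟨hne, hsub, hc⟩
  constructor
  · exact (Set.ncard_pos U.toFinite).mpr hUne
  -- choose, for each i, a neuron it acts on nontrivially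
  set g : Fin N → Fin N := fun i => (hnind i).choose with hg
  have hgne : ∀ i, Δ i (g i) ≠ 0 := fun i => (hnind i).choose_spec
  have hgnA : ∀ i ∈ U, g i ∉ A := by
    intro i hi hmem
    exact hgne i (homPart_delta_zero hdiag hA (hUA hi) hmem)
  -- the map sending i ∈ U to the homogeneous part of g i
  set f : Fin N → Set (Fin N) := fun i => {j | StructId F Δ (g i) j} with hf
  have hfmem : ∀ i, g i ∈ f i := fun i => structId_refl F Δ (g i)
  have hmaps : ∀ i ∈ U, f i ∈ {B : Set (Fin N) | IsHomPart F Δ B} \ {A} := by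
    intro i hi
    refine ⟨⟨g i, rfl⟩, ?_⟩
    intro hfa
    exact hgnA i hi (hfa ▸ hfmem i)
  have hinj : Set.InjOn f U := by
    intro i hi j hj hfij
    have hsi : StructId F Δ (g i) (g j) := by
      have : g j ∈ f i := hfij ▸ hfmem j
      exact this
    have hiA : i ∈ A := hUA hi
    have hjA : j ∈ A := hUA hj
    have higj : i ≠ g j := fun h => hgnA j hj (h ▸ hiA)
    have higi : i ≠ g i := fun h => hgnA i hi (h ▸ hiA)
    have hΔigj : Δ i (g j) ≠ 0 := by
      rcases hsi with heq | ⟨_, _, _, h4⟩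
      · rw [← heq]; exact hgne i
      · rw [← h4 i higi higj]; exact hgne i
    exact hcand (g j) (hgnA j hj) i hi j hj hΔigj (hgne j)
  have hfin : ({B : Set (Fin N) | IsHomPart F Δ B} \ {A}).Finite := by
    apply Set.Finite.diff
    have : {B : Set (Fin N) | IsHomPart F Δ B} ⊆
        Set.range (fun i : Fin N => {j | StructId F Δ i j}) := by
      rintro B ⟨i, rfl⟩; exact ⟨i, rfl⟩
    exact (Set.finite_range _).subset this
  have h1 : U.ncard ≤ ({B : Set (Fin N) | IsHomPart F Δ B} \ {A}).ncard :=
    Set.ncard_le_ncard_of_injOn f hmaps hinj hfin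
  have h2 : ({B : Set (Fin N) | IsHomPart F Δ B} \ {A}).ncard
      = {B : Set (Fin N) | IsHomPart F Δ B}.ncard - 1 :=
    Set.ncard_diff_singleton_of_mem (s := {B : Set (Fin N) | IsHomPart F Δ B}) hA
  omega

end NeuralNet
end

section
/- There exists a network with 5 neurons satisfying the standing assumptions and Dale's Principle, together with a synaptically equivalent network with 6 neurons. Consequently, a network can satisfy Dale's Principle without having the maximum number of neurons within its synaptical equivalence class: Dale's Principle is not sufficient for dynamical optimality. (Main Theorem: counterexample.) -/
namespace NeuralNet

open Classical

-- matrices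
def m5 : Fin 5 → Fin 5 → ℤ := ![![0,1,0,0,0], ![0,0,1,0,0], ![0,0,0,1,0], ![1,0,0,0,0], ![1,1,0,0,0]]
def m6 : Fin 6 → Fin 6 → ℤ := ![![0,1,0,0,0,0], ![0,0,1,0,0,0], ![0,0,0,1,0,0], ![1,0,0,0,0,0], ![1,0,0,0,0,0], ![0,1,0,0,0,0]]

noncomputable def D5 : Fin 5 → Fin 5 → ℝ := fun i j => (m5 i j : ℝ)
noncomputable def D6 : Fin 6 → Fin 6 → ℝ := fun i j => (m6 i j : ℝ)

def F5 : Fin 5 → ℕ := fun i => i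
def F6 : Fin 6 → ℕ := fun i => min i 4

lemma D5_zero_iff {i j} : D5 i j = 0 ↔ m5 i j = 0 := Int.cast_eq_zero
lemma D6_zero_iff {i j} : D6 i j = 0 ↔ m6 i j = 0 := Int.cast_eq_zero

lemma class5 (k : Fin 5) : {j | StructId F5 D5 k j} = {k} := by
  ext j
  simp only [Set.mem_setOf_eq, Set.mem_singleton_iff, StructId]
  constructor
  · rintro (rfl | ⟨hF, -⟩)
    · rfl
    · exact (Fin.val_injective hF).symm
  · rintro rfl; exact Or.inl rfl

def SZ6 (i j : Fin 6) : Prop :=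
  i = j ∨ (F6 i = F6 j ∧ m6 i j = 0 ∧ m6 j i = 0 ∧ ∀ h, h ≠ i → h ≠ j → m6 h i = m6 h j)

instance (i j : Fin 6) : Decidable (SZ6 i j) := by unfold SZ6; infer_instance

lemma structId6_iff (i j) : StructId F6 D6 i j ↔ SZ6 i j := by
  unfold StructId SZ6 D6
  simp [Int.cast_eq_zero, Int.cast_inj]

lemma sz6_char : ∀ i j, SZ6 i j ↔ (i = j ∨ (i = 4 ∧ j = 5) ∨ (i = 5 ∧ j = 4)) := by decide

lemma class6_lt (k : Fin 6) (hk : (k:ℕ) < 4) : {j | StructId F6 D6 k j} = {k} := by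
  ext j
  rw [Set.mem_setOf_eq, structId6_iff, sz6_char, Set.mem_singleton_iff]
  constructor
  · rintro (rfl | ⟨rfl, rfl⟩ | ⟨rfl, rfl⟩) <;> first | rfl | omega
  · rintro rfl; exact Or.inl rfl

lemma class6_4 : {j | StructId F6 D6 4 j} = {4, 5} := by
  ext j
  rw [Set.mem_setOf_eq, structId6_iff]
  simp only [Set.mem_insert_iff, Set.mem_singleton_iff]
  revert j; decide

lemma class6_5 : {j | StructId F6 D6 5 j} = {4, 5} := by
  ext j
  rw [Set.mem_setOf_eq, structId6_iff]
  simp only [Set.mem_insert_iff, Set.mem_singleton_iff]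
  revert j; decide

-- deltaIB/deltaUB helpers
lemma deltaIB_const {N} (Δ : Fin N → Fin N → ℝ) (i : Fin N) (B : Set (Fin N)) (c : ℝ)
    (hB : B.Nonempty) (h : ∀ x ∈ B, Δ i x = c) : deltaIB Δ i B = c := by
  rw [deltaIB, dif_pos hB]; exact h _ hB.choose_spec

lemma deltaIB_singleton {N} (Δ : Fin N → Fin N → ℝ) (i m : Fin N) :
    deltaIB Δ i {m} = Δ i m :=
  deltaIB_const _ _ _ _ ⟨m, rfl⟩ (fun x hx => by rw [Set.mem_singleton_iff] at hx; rw [hx])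

lemma deltaUB_zero {N} (Δ : Fin N → Fin N → ℝ) (U B : Set (Fin N))
    (h : ∀ i ∈ U, deltaIB Δ i B = 0) : deltaUB Δ U B = 0 := by
  rw [deltaUB, dif_neg]
  rintro ⟨i, hi, hne⟩; exact hne (h i hi)

lemma deltaUB_eq {N} (Δ : Fin N → Fin N → ℝ) (U B : Set (Fin N)) (c : ℝ) (hc : c ≠ 0)
    (hall : ∀ i ∈ U, deltaIB Δ i B = 0 ∨ deltaIB Δ i B = c)
    (hex : ∃ i ∈ U, deltaIB Δ i B = c) : deltaUB Δ U B = c := by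
  have hE : ∃ i ∈ U, deltaIB Δ i B ≠ 0 := by
    obtain ⟨i, hi, h⟩ := hex; exact ⟨i, hi, h ▸ hc⟩
  rw [deltaUB, dif_pos hE]
  rcases hall _ hE.choose_spec.1 with h0 | h
  · exact absurd h0 hE.choose_spec.2
  · exact h

lemma deltaUB_single {N} (Δ : Fin N → Fin N → ℝ) (k : Fin N) (B : Set (Fin N)) :
    deltaUB Δ {k} B = deltaIB Δ k B := by
  by_cases h : deltaIB Δ k B = 0
  · rw [h]
    exact deltaUB_zero _ _ _ (fun i hi => by rw [Set.mem_singleton_iff] at hi; rw [hi, h])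
  · exact deltaUB_eq _ _ _ _ h
      (fun i hi => by rw [Set.mem_singleton_iff] at hi; rw [hi]; exact Or.inr rfl)
      ⟨k, rfl, rfl⟩


lemma homPart5_iff (A : Set (Fin 5)) : IsHomPart F5 D5 A ↔ ∃ k, A = {k} := by
  constructor
  · rintro ⟨k, rfl⟩; exact ⟨k, class5 k⟩
  · rintro ⟨k, rfl⟩; exact ⟨k, (class5 k).symm⟩

lemma homPart6_iff (A : Set (Fin 6)) :
    IsHomPart F6 D6 A ↔ A = {0} ∨ A = {1} ∨ A = {2} ∨ A = {3} ∨ A = {4, 5} := by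
  constructor
  · rintro ⟨k, rfl⟩
    fin_cases k
    · exact Or.inl (class6_lt 0 (by decide))
    · exact Or.inr (Or.inl (class6_lt 1 (by decide)))
    · exact Or.inr (Or.inr (Or.inl (class6_lt 2 (by decide))))
    · exact Or.inr (Or.inr (Or.inr (Or.inl (class6_lt 3 (by decide)))))
    · exact Or.inr (Or.inr (Or.inr (Or.inr class6_4)))
    · exact Or.inr (Or.inr (Or.inr (Or.inr class6_5)))
  · rintro (rfl | rfl | rfl | rfl | rfl)
    · exact ⟨0, (class6_lt 0 (by decide)).symm⟩
    · exact ⟨1, (class6_lt 1 (by decide)).symm⟩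
    · exact ⟨2, (class6_lt 2 (by decide)).symm⟩
    · exact ⟨3, (class6_lt 3 (by decide)).symm⟩
    · exact ⟨4, class6_4.symm⟩

def phi : Set (Fin 5) → Set (Fin 6) := fun U =>
  {i' | (∃ i ∈ U, (i' : ℕ) = (i : ℕ)) ∨ ((i' : ℕ) = 5 ∧ (4 : Fin 5) ∈ U)}

lemma phi0 : phi {0} = {0} := by
  ext i'; simp only [phi, Set.mem_setOf_eq, Set.mem_singleton_iff]
  fin_cases i' <;> simp <;> decide

lemma phi1 : phi {1} = {1} := by
  ext i'; simp only [phi, Set.mem_setOf_eq, Set.mem_singleton_iff]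
  fin_cases i' <;> simp <;> decide

lemma phi2 : phi {2} = {2} := by
  ext i'; simp only [phi, Set.mem_setOf_eq, Set.mem_singleton_iff]
  fin_cases i' <;> simp <;> decide

lemma phi3 : phi {3} = {3} := by
  ext i'; simp only [phi, Set.mem_setOf_eq, Set.mem_singleton_iff]
  fin_cases i' <;> simp <;> decide

lemma phi4 : phi {4} = {4, 5} := by
  ext i'; simp only [phi, Set.mem_setOf_eq, Set.mem_insert_iff, Set.mem_singleton_iff]
  fin_cases i' <;> simp <;> decide

def P5 : Set (Set (Fin 5)) := {{0}, {1}, {2}, {3}, {4}}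
def P6 : Set (Set (Fin 6)) := {{0}, {1}, {2}, {3}, {4, 5}}

lemma memP5_iff (U : Set (Fin 5)) :
    U ∈ P5 ↔ U = {0} ∨ U = {1} ∨ U = {2} ∨ U = {3} ∨ U = {4} := by
  simp [P5]

lemma memP6_iff (U : Set (Fin 6)) :
    U ∈ P6 ↔ U = {0} ∨ U = {1} ∨ U = {2} ∨ U = {3} ∨ U = {4, 5} := by
  simp [P6]

lemma Q_ncard_pos {N : ℕ} {Δ : Fin N → Fin N → ℝ} {A : Set (Fin N)} (hA : A.Nonempty)
    {Q : Set (Set (Fin N))} (hQ : IsUnitPartition Δ A Q) : 1 ≤ Q.ncard := by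
  obtain ⟨x, hx⟩ := hA
  rw [← hQ.2.2] at hx
  obtain ⟨U, hU, -⟩ := hx
  exact (Set.ncard_pos (Set.toFinite Q)).2 ⟨U, hU⟩

lemma singleton_synUnit {α : Type*} {N : ℕ} (F : Fin N → α) (Δ : Fin N → Fin N → ℝ)
    (k : Fin N) (hcl : IsHomPart F Δ {k}) : IsSynapticalUnit F Δ {k} := by
  refine ⟨{k}, {{k}}, hcl, ?_, ?_, rfl⟩
  · refine ⟨?_, Set.pairwiseDisjoint_singleton _ _, Set.sUnion_singleton _⟩
    rintro U hU
    rw [Set.mem_singleton_iff] at hU; subst hU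
    refine ⟨⟨k, rfl⟩, subset_rfl, ?_⟩
    intro h _ i hi j hj _ _
    rw [Set.mem_singleton_iff] at hi hj; rw [hi, hj]
  · intro Q hQ
    rw [Set.ncard_singleton]
    exact Q_ncard_pos (A := {k}) ⟨k, rfl⟩ hQ

lemma pair_synUnit : IsSynapticalUnit F6 D6 {4, 5} := by
  refine ⟨{4, 5}, {{4, 5}}, ⟨4, class6_4.symm⟩, ?_, ?_, rfl⟩
  · refine ⟨?_, Set.pairwiseDisjoint_singleton _ _, Set.sUnion_singleton _⟩
    rintro U hU
    rw [Set.mem_singleton_iff] at hU; subst hU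
    refine ⟨⟨4, Or.inl rfl⟩, subset_rfl, ?_⟩
    intro h hh i hi j hj hi0 hj0
    simp only [Set.mem_insert_iff, Set.mem_singleton_iff] at hh hi hj
    rw [Ne, D6_zero_iff] at hi0 hj0
    revert hh hi hj hi0 hj0
    revert h i j
    decide
  · intro Q hQ
    rw [Set.ncard_singleton]
    exact Q_ncard_pos (A := {4, 5}) ⟨4, Or.inl rfl⟩ hQ

lemma D5zero {i j : Fin 5} (h : m5 i j = 0) : D5 i j = 0 := by
  simp only [D5, h, Int.cast_zero]
lemma D5one {i j : Fin 5} (h : m5 i j = 1) : D5 i j = 1 := by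
  simp only [D5, h, Int.cast_one]
lemma D6zero {i j : Fin 6} (h : m6 i j = 0) : D6 i j = 0 := by
  simp only [D6, h, Int.cast_zero]
lemma D6one {i j : Fin 6} (h : m6 i j = 1) : D6 i j = 1 := by
  simp only [D6, h, Int.cast_one]

lemma memP5_all (m : Fin 5) : ({m} : Set (Fin 5)) ∈ P5 := by
  fin_cases m <;> simp [P5]

lemma partImage_single (m : Fin 5) : partImage P5 phi {m} = phi {m} := by
  ext i'
  constructor
  · rintro ⟨W, hW, hsub, hmem⟩
    rw [memP5_iff] at hW
    rcases hW with rfl | rfl | rfl | rfl | rfl <;>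
      · have hk := hsub (Set.mem_singleton _)
        rw [Set.mem_singleton_iff] at hk
        subst hk
        exact hmem
  · intro h
    exact ⟨{m}, memP5_all m, subset_rfl, h⟩

lemma mem45_iff (i : Fin 6) : i ∈ ({4, 5} : Set (Fin 6)) ↔ i = 4 ∨ i = 5 := by
  simp [Set.mem_insert_iff]

lemma deltaIB_pair (Δ : Fin 6 → Fin 6 → ℝ) (i : Fin 6) (h : Δ i 4 = Δ i 5) :
    deltaIB Δ i {4, 5} = Δ i 4 := by
  refine deltaIB_const _ _ _ _ ⟨4, Or.inl rfl⟩ ?_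
  intro x hx
  rcases (mem45_iff x).1 hx with rfl | rfl
  · rfl
  · exact h.symm

lemma deltaUB_pair_left (B : Set (Fin 6)) (c : ℝ) (hc : c ≠ 0)
    (h4 : deltaIB D6 4 B = c) (h5 : deltaIB D6 5 B = 0) :
    deltaUB D6 {4, 5} B = c := by
  refine deltaUB_eq _ _ _ _ hc ?_ ⟨4, Or.inl rfl, h4⟩
  intro i hi
  rcases (mem45_iff i).1 hi with rfl | rfl
  · exact Or.inr h4
  · exact Or.inl h5

lemma deltaUB_pair_right (B : Set (Fin 6)) (c : ℝ) (hc : c ≠ 0)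
    (h4 : deltaIB D6 4 B = 0) (h5 : deltaIB D6 5 B = c) :
    deltaUB D6 {4, 5} B = c := by
  refine deltaUB_eq _ _ _ _ hc ?_ ⟨5, Or.inr rfl, h5⟩
  intro i hi
  rcases (mem45_iff i).1 hi with rfl | rfl
  · exact Or.inl h4
  · exact Or.inr h5

lemma deltaUB_pair_zero (B : Set (Fin 6))
    (h4 : deltaIB D6 4 B = 0) (h5 : deltaIB D6 5 B = 0) :
    deltaUB D6 {4, 5} B = 0 := by
  refine deltaUB_zero _ _ _ ?_
  intro i hi
  rcases (mem45_iff i).1 hi with rfl | rfl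
  · exact h4
  · exact h5

lemma hom6_mem_pair {A : Set (Fin 6)} (hA : IsHomPart F6 D6 A) {x y : Fin 6}
    (hx : x ∈ A) (hy : y ∈ A) (hx5 : x ≠ 5) (hy5 : y ≠ 5) : x = y := by
  obtain ⟨k, rfl⟩ := hA
  rw [Set.mem_setOf_eq, structId6_iff, sz6_char] at hx hy
  revert hx hy hx5 hy5
  revert k x y
  decide

-- the unit conditions
lemma units5 : ∀ U ∈ P5, IsSynapticalUnit F5 D5 U := by
  intro U hU
  rw [memP5_iff] at hU
  rcases hU with rfl | rfl | rfl | rfl | rfl <;>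
    exact singleton_synUnit _ _ _ ((homPart5_iff _).2 ⟨_, rfl⟩)

lemma units6 : ∀ U' ∈ P6, IsSynapticalUnit F6 D6 U' := by
  intro U hU
  rw [memP6_iff] at hU
  rcases hU with rfl | rfl | rfl | rfl | rfl
  · exact singleton_synUnit _ _ _ ((homPart6_iff _).2 (Or.inl rfl))
  · exact singleton_synUnit _ _ _ ((homPart6_iff _).2 (Or.inr (Or.inl rfl)))
  · exact singleton_synUnit _ _ _ ((homPart6_iff _).2 (Or.inr (Or.inr (Or.inl rfl))))
  · exact singleton_synUnit _ _ _ ((homPart6_iff _).2 (Or.inr (Or.inr (Or.inr (Or.inl rfl)))))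
  · exact pair_synUnit

lemma disj5 : P5.PairwiseDisjoint id := by
  intro U hU V hV hne
  rw [memP5_iff] at hU hV
  simp only [Function.onFun, id]
  refine Set.disjoint_left.2 ?_
  intro x hx1 hx2
  rcases hU with rfl | rfl | rfl | rfl | rfl <;> rcases hV with rfl | rfl | rfl | rfl | rfl <;>
    first
      | exact hne rfl
      | (rw [Set.mem_singleton_iff] at hx1 hx2
         subst hx1
         revert hx2
         decide)

lemma disj6 : P6.PairwiseDisjoint id := by
  intro U hU V hV hne
  rw [memP6_iff] at hU hV
  simp only [Function.onFun, id]
  refine Set.disjoint_left.2 ?_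
  intro x hx1 hx2
  rcases hU with rfl | rfl | rfl | rfl | rfl <;> rcases hV with rfl | rfl | rfl | rfl | rfl <;>
    simp only [Set.mem_singleton_iff, mem45_iff] at hx1 hx2 <;>
    first
      | exact hne rfl
      | (subst hx1; revert hx2; decide)
      | (subst hx2; revert hx1; decide)

lemma cover5 : ⋃₀ P5 = Set.univ := by
  ext x
  simp only [Set.mem_sUnion, Set.mem_univ, iff_true]
  fin_cases x
  · exact ⟨{0}, by simp [P5], rfl⟩
  · exact ⟨{1}, by simp [P5], rfl⟩
  · exact ⟨{2}, by simp [P5], rfl⟩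
  · exact ⟨{3}, by simp [P5], rfl⟩
  · exact ⟨{4}, by simp [P5], rfl⟩

lemma cover6 : ⋃₀ P6 = Set.univ := by
  ext x
  simp only [Set.mem_sUnion, Set.mem_univ, iff_true]
  fin_cases x
  · exact ⟨{0}, by simp [P6], rfl⟩
  · exact ⟨{1}, by simp [P6], rfl⟩
  · exact ⟨{2}, by simp [P6], rfl⟩
  · exact ⟨{3}, by simp [P6], rfl⟩
  · exact ⟨{4, 5}, by simp [P6], Or.inl rfl⟩
  · exact ⟨{4, 5}, by simp [P6], Or.inr rfl⟩

lemma bijon : Set.BijOn phi P5 P6 := by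
  refine ⟨?_, ?_, ?_⟩
  · intro U hU
    rw [memP5_iff] at hU
    rcases hU with rfl | rfl | rfl | rfl | rfl
    · rw [phi0]; simp [P6]
    · rw [phi1]; simp [P6]
    · rw [phi2]; simp [P6]
    · rw [phi3]; simp [P6]
    · rw [phi4]; simp [P6]
  · intro U hU V hV h
    rw [memP5_iff] at hU hV
    rcases hU with rfl | rfl | rfl | rfl | rfl <;> rcases hV with rfl | rfl | rfl | rfl | rfl <;>
      first
        | rfl
        | (exfalso
           simp only [phi0, phi1, phi2, phi3, phi4] at h
           have := Set.ext_iff.1 h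
           simp only [Set.mem_singleton_iff, Set.mem_insert_iff] at this
           exact absurd this (by decide))
  · intro U' hU'
    rw [memP6_iff] at hU'
    rcases hU' with rfl | rfl | rfl | rfl | rfl
    · exact ⟨{0}, by simp [P5], phi0⟩
    · exact ⟨{1}, by simp [P5], phi1⟩
    · exact ⟨{2}, by simp [P5], phi2⟩
    · exact ⟨{3}, by simp [P5], phi3⟩
    · exact ⟨{4}, by simp [P5], phi4⟩

lemma cond_a : ∀ U ∈ P5, ∀ V ∈ P5,
    ((∃ A, IsHomPart F5 D5 A ∧ U ⊆ A ∧ V ⊆ A) ↔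
      (∃ A', IsHomPart F6 D6 A' ∧ phi U ⊆ A' ∧ phi V ⊆ A')) := by
  intro U hU V hV
  rw [memP5_iff] at hU hV
  constructor
  · rintro ⟨A, hA, hUA, hVA⟩
    obtain ⟨k, rfl⟩ := (homPart5_iff A).1 hA
    have hUV : U = V := by
      rcases hU with rfl | rfl | rfl | rfl | rfl <;> rcases hV with rfl | rfl | rfl | rfl | rfl <;>
        first
          | rfl
          | (have h1 := hUA (Set.mem_singleton _)
             have h2 := hVA (Set.mem_singleton _)
             rw [Set.mem_singleton_iff] at h1 h2
             rw [← h2] at h1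
             exact absurd h1 (by decide))
    subst hUV
    rcases hU with rfl | rfl | rfl | rfl | rfl
    · exact ⟨{0}, (homPart6_iff _).2 (Or.inl rfl), by rw [phi0], by rw [phi0]⟩
    · exact ⟨{1}, (homPart6_iff _).2 (Or.inr (Or.inl rfl)), by rw [phi1], by rw [phi1]⟩
    · exact ⟨{2}, (homPart6_iff _).2 (Or.inr (Or.inr (Or.inl rfl))), by rw [phi2], by rw [phi2]⟩
    · exact ⟨{3}, (homPart6_iff _).2 (Or.inr (Or.inr (Or.inr (Or.inl rfl)))), by rw [phi3],
        by rw [phi3]⟩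
    · exact ⟨{4, 5}, (homPart6_iff _).2 (Or.inr (Or.inr (Or.inr (Or.inr rfl)))), by rw [phi4],
        by rw [phi4]⟩
  · rintro ⟨A, hA, hUA, hVA⟩
    have hUV : U = V := by
      rcases hU with rfl | rfl | rfl | rfl | rfl <;> rcases hV with rfl | rfl | rfl | rfl | rfl <;>
        first
          | rfl
          | (simp only [phi0, phi1, phi2, phi3, phi4] at hUA hVA
             have h1 : _ ∈ A := hUA (by first | exact rfl | exact Or.inl rfl)
             have h2 : _ ∈ A := hVA (by first | exact rfl | exact Or.inl rfl)
             exact absurd (hom6_mem_pair hA h1 h2 (by decide) (by decide)) (by decide))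
    subst hUV
    rcases hU with rfl | rfl | rfl | rfl | rfl
    · exact ⟨{0}, (homPart5_iff _).2 ⟨0, rfl⟩, subset_rfl, subset_rfl⟩
    · exact ⟨{1}, (homPart5_iff _).2 ⟨1, rfl⟩, subset_rfl, subset_rfl⟩
    · exact ⟨{2}, (homPart5_iff _).2 ⟨2, rfl⟩, subset_rfl, subset_rfl⟩
    · exact ⟨{3}, (homPart5_iff _).2 ⟨3, rfl⟩, subset_rfl, subset_rfl⟩
    · exact ⟨{4}, (homPart5_iff _).2 ⟨4, rfl⟩, subset_rfl, subset_rfl⟩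

lemma fin5_cases : ∀ m : Fin 5, m = 0 ∨ m = 1 ∨ m = 2 ∨ m = 3 ∨ m = 4 := by decide

lemma cond_b : ∀ U ∈ P5, ∀ B, IsHomPart F5 D5 B →
    deltaUB D5 U B = deltaUB D6 (phi U) (partImage P5 phi B) := by
  intro U hU B hB
  obtain ⟨m, rfl⟩ := (homPart5_iff B).1 hB
  rw [partImage_single]
  rw [memP5_iff] at hU
  rcases hU with rfl | rfl | rfl | rfl | rfl <;>
    rcases fin5_cases m with rfl | rfl | rfl | rfl | rfl <;>
    simp only [phi0, phi1, phi2, phi3, phi4] <;>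
    first
      | (rw [deltaUB_single, deltaUB_single, deltaIB_singleton, deltaIB_singleton]
         exact congrArg (Int.cast : ℤ → ℝ) (by decide))
      | (rw [deltaUB_single, deltaUB_single, deltaIB_singleton,
            deltaIB_pair _ _ (congrArg (Int.cast : ℤ → ℝ) (by decide))]
         exact congrArg (Int.cast : ℤ → ℝ) (by decide))
      | (rw [deltaUB_single, deltaIB_singleton,
            deltaUB_pair_left _ 1 one_ne_zero
              (by rw [deltaIB_singleton]; exact D6one (by decide))
              (by rw [deltaIB_singleton]; exact D6zero (by decide))]
         exact D5one (by decide))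
      | (rw [deltaUB_single, deltaIB_singleton,
            deltaUB_pair_right _ 1 one_ne_zero
              (by rw [deltaIB_singleton]; exact D6zero (by decide))
              (by rw [deltaIB_singleton]; exact D6one (by decide))]
         exact D5one (by decide))
      | (rw [deltaUB_single, deltaIB_singleton,
            deltaUB_pair_zero _
              (by rw [deltaIB_singleton]; exact D6zero (by decide))
              (by rw [deltaIB_singleton]; exact D6zero (by decide))]
         exact D5zero (by decide))
      | (rw [deltaUB_single, deltaIB_singleton,
            deltaUB_pair_zero _
              (by rw [deltaIB_pair _ _ (congrArg (Int.cast : ℤ → ℝ) (by decide))]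
                  exact D6zero (by decide))
              (by rw [deltaIB_pair _ _ (congrArg (Int.cast : ℤ → ℝ) (by decide))]
                  exact D6zero (by decide))]
         exact D5zero (by decide))

lemma cond_c : ∀ U ∈ P5, ∀ i ∈ U, ∀ i' ∈ phi U, F5 i = F6 i' := by
  intro U hU i hi i' hi'
  rw [memP5_iff] at hU
  rcases hU with rfl | rfl | rfl | rfl | rfl <;>
    simp only [phi0, phi1, phi2, phi3, phi4] at hi' <;>
    simp only [Set.mem_singleton_iff, mem45_iff] at hi hi' <;>
    first
      | (subst hi; subst hi'; decide)
      | (subst hi; rcases hi' with rfl | rfl <;> decide)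

/-- there is a 5-neuron network satisfying the standing assumptions and
Dale's Principle which is synaptically equivalent to a 6-neuron network; hence Dale's
Principle does not imply having the maximum number of neurons in the class. -/
theorem dale_principle_not_sufficient :
    ∃ (α : Type) (F : Fin 5 → α) (Δ : Fin 5 → Fin 5 → ℝ)
      (F' : Fin 6 → α) (Δ' : Fin 6 → Fin 6 → ℝ),
      (∀ i, Δ i i = 0) ∧ (∀ i, ∃ j, Δ i j ≠ 0) ∧
      (∀ i : Fin 5, ¬ Mixed Δ i) ∧
      (∀ i, Δ' i i = 0) ∧ (∀ i, ∃ j, Δ' i j ≠ 0) ∧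
      SynEquiv F Δ F' Δ' := by
  refine ⟨ℕ, F5, D5, F6, D6, ?_, ?_, ?_, ?_, ?_, ?_⟩
  · intro i
    exact D5zero (by revert i; decide)
  · intro i
    obtain ⟨j, hj⟩ : ∃ j, m5 i j ≠ 0 := by revert i; decide
    exact ⟨j, fun h => hj (D5_zero_iff.1 h)⟩
  · rintro i ⟨-, j', hj'⟩
    have h0 : (0 : ℤ) ≤ m5 i j' := by clear hj'; revert i j'; decide
    exact absurd hj' (not_lt.2 (show (0 : ℝ) ≤ ((m5 i j' : ℤ) : ℝ) by exact_mod_cast h0))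
  · intro i
    exact D6zero (by revert i; decide)
  · intro i
    obtain ⟨j, hj⟩ : ∃ j, m6 i j ≠ 0 := by revert i; decide
    exact ⟨j, fun h => hj (D6_zero_iff.1 h)⟩
  · exact ⟨P5, P6, phi, units5, disj5, cover5, units6, disj6, cover6, bijon,
      cond_a, cond_b, cond_c⟩

end NeuralNet
end
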